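/- Let w be a symmetric n×n real matrix with nonnegative entries and zero diagonal such that the graph with edges {(i,j) : w_{ij} > 0} is connected, and let Y be a skew-symmetric n×n real matrix. Then the normal equation Δ₀ s = -div Y has a solution s : Fin n → ℝ; i.e., -div Y lies in the range of the weighted graph Laplacian Δ₀. -/

import Mathlib

open Matrix RealInnerProductSpace

/-- The weighted graph Laplacian `Δ₀` associated with a weight matrix `w`. -/
def lap {n : ℕ} (w : Matrix (Fin n) (Fin n) ℝ) : Matrix (Fin n) (Fin n) ℝ :=
  Matrix.of fun i j => if i = j then ∑ k, w i k else -(w i j)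

/-- The divergence of an edge flow `Y`: `(div Y) i = ∑_j w_{ij} Y_{ij}`. -/
def dvg {n : ℕ} (w Y : Matrix (Fin n) (Fin n) ℝ) : Fin n → ℝ :=
  fun i => ∑ j, w i j * Y i j

/-- The comparison graph of `w` is connected: any two vertices are joined by a
path of edges `{(i,j) : w i j > 0}`. -/
def IsConn {n : ℕ} (w : Matrix (Fin n) (Fin n) ℝ) : Prop :=
  ∀ i j : Fin n, Relation.ReflTransGen (fun a b => 0 < w a b) i j

/-- Double sum of an antisymmetric function vanishes. -/
lemma sum_antisym {n : ℕ} (f : Fin n → Fin n → ℝ) (h : ∀ i j, f i j = - f j i) :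
    ∑ i, ∑ j, f i j = 0 := by
  have h2 : ∑ i, ∑ j, f i j = - ∑ i, ∑ j, f i j := by
    calc ∑ i, ∑ j, f i j = ∑ j, ∑ i, f i j := Finset.sum_comm
    _ = ∑ j, ∑ i, -(f j i) := by simp_rw [← h]
    _ = - ∑ i, ∑ j, f i j := by simp
  linarith

lemma lap_mulVec {n : ℕ} (w : Matrix (Fin n) (Fin n) ℝ) (hwdiag : ∀ i, w i i = 0)
    (u : Fin n → ℝ) (i : Fin n) :
    ((lap w) *ᵥ u) i = ∑ j, w i j * (u i - u j) := by
  have hl : ∀ j, lap w i j = (if i = j then ∑ k, w i k else 0) - w i j := by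
    intro j
    by_cases hij : i = j
    · subst hij; simp [lap, hwdiag]
    · simp [lap, hij]
  simp only [Matrix.mulVec, dotProduct, hl, sub_mul, ite_mul, zero_mul,
    Finset.sum_sub_distrib, Finset.sum_ite_eq, Finset.mem_univ, if_true, mul_sub,
    Finset.sum_mul]

theorem stmt16 {n : ℕ} (w Y : Matrix (Fin n) (Fin n) ℝ)
    (hwsymm : wᵀ = w) (hwnonneg : ∀ i j, 0 ≤ w i j)
    (hwdiag : ∀ i, w i i = 0) (hconn : IsConn w) (hYskew : Yᵀ = -Y) :
    ∃ s : Fin n → ℝ, (lap w).mulVec s = -(dvg w Y) := by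
  have hw : ∀ i j, w j i = w i j := fun i j => show wᵀ i j = w i j from congrFun (congrFun hwsymm i) j
  have hY : ∀ i j, Y j i = -(Y i j) := fun i j => show Yᵀ i j = (-Y) i j from congrFun (congrFun hYskew i) j
  -- symmetry of the Laplacian
  have hlapsymm : (lap w)ᵀ = lap w := by
    ext i j
    by_cases hij : i = j
    · subst hij; rfl
    · simp only [Matrix.transpose_apply, lap, Matrix.of_apply, hij, Ne.symm hij, if_false]
      rw [hw]
  set T : EuclideanSpace ℝ (Fin n) →ₗ[ℝ] EuclideanSpace ℝ (Fin n) :=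
    Matrix.toEuclideanLin (lap w) with hT
  -- T is symmetric
  have hsym : ∀ x y : EuclideanSpace ℝ (Fin n), ⟪T x, y⟫ = ⟪x, T y⟫ := by
    intro x y
    simp only [hT, PiLp.inner_apply, Matrix.toEuclideanLin_apply, RCLike.inner_apply,
      conj_trivial, WithLp.equiv_symm_apply, PiLp.toLp_apply, WithLp.equiv_apply, Matrix.mulVec,
      dotProduct]
    simp_rw [Finset.sum_mul, Finset.mul_sum]
    rw [Finset.sum_comm]
    refine Finset.sum_congr rfl fun i _ => Finset.sum_congr rfl fun j _ => ?_
    have h := congrFun (congrFun hlapsymm i) j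
    simp only [Matrix.transpose_apply] at h
    rw [← h]; ring
  -- (range T)ᗮ ≤ ker T
  have h1 : (LinearMap.range T)ᗮ ≤ LinearMap.ker T := by
    intro y hy
    have h0 : ∀ x : EuclideanSpace ℝ (Fin n), ⟪x, T y⟫ = 0 := by
      intro x
      rw [← hsym]
      exact (Submodule.mem_orthogonal _ y).mp hy (T x) (LinearMap.mem_range_self T x)
    have := h0 (T y)
    rw [LinearMap.mem_ker]
    exact inner_self_eq_zero.mp this
  have h2 : (LinearMap.ker T)ᗮ ≤ LinearMap.range T := by
    calc (LinearMap.ker T)ᗮ ≤ (LinearMap.range T)ᗮᗮ := Submodule.orthogonal_le h1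
    _ = LinearMap.range T := Submodule.orthogonal_orthogonal _
  -- kernel elements are constant
  have hker : ∀ u : EuclideanSpace ℝ (Fin n), T u = 0 → ∀ i j, u i = u j := by
    intro u hu
    have hmv : ∀ i, ∑ j, w i j * (u i - u j) = 0 := by
      intro i
      have h3 : ((lap w) *ᵥ (WithLp.equiv 2 (Fin n → ℝ) u)) i = 0 := by
        have := congrFun (congrArg (WithLp.equiv 2 (Fin n → ℝ)) hu) i
        simpa [hT, Matrix.toEuclideanLin_apply] using this
      rw [lap_mulVec w hwdiag] at h3
      exact h3
    -- quadratic form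
    have hS : ∑ i, ∑ j, w i j * (u i - u j)^2 = 0 := by
      have hf : ∑ i, ∑ j, (w i j * (u i - u j)^2
          - 2 * (u i * (w i j * (u i - u j)))) = 0 := by
        apply sum_antisym
        intro i j
        rw [hw i j]
        ring
      have hQ : ∑ i, ∑ j, (u i * (w i j * (u i - u j))) = 0 := by
        have : ∀ i, ∑ j, (u i * (w i j * (u i - u j))) = 0 := by
          intro i
          rw [← Finset.mul_sum, hmv i, mul_zero]
        simp [this]
      calc ∑ i, ∑ j, w i j * (u i - u j)^2
          = ∑ i, ∑ j, (w i j * (u i - u j)^2 - 2 * (u i * (w i j * (u i - u j))))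
            + 2 * ∑ i, ∑ j, (u i * (w i j * (u i - u j))) := by
            simp [Finset.sum_sub_distrib, Finset.mul_sum]
        _ = 0 := by rw [hf, hQ]; ring
    have hterm : ∀ i j, w i j * (u i - u j)^2 = 0 := by
      have hnn : ∀ i j, 0 ≤ w i j * (u i - u j)^2 :=
        fun i j => mul_nonneg (hwnonneg i j) (sq_nonneg _)
      intro i j
      have hinner : ∀ i, ∑ j, w i j * (u i - u j)^2 = 0 := by
        have := (Finset.sum_eq_zero_iff_of_nonneg
          (fun i _ => Finset.sum_nonneg fun j _ => hnn i j)).mp hS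
        intro i; exact this i (Finset.mem_univ i)
      exact (Finset.sum_eq_zero_iff_of_nonneg (fun j _ => hnn i j)).mp (hinner i) j
        (Finset.mem_univ j)
    have hedge : ∀ i j, 0 < w i j → u i = u j := by
      intro i j hij
      have := hterm i j
      rcases mul_eq_zero.mp this with h | h
      · exact absurd h (ne_of_gt hij)
      · have := pow_eq_zero_iff (n := 2) (by norm_num) |>.mp h
        linarith [sub_eq_zero.mp this]
    intro i j
    induction hconn i j with
    | refl => rfl
    | tail _ h ih => exact ih.trans (hedge _ _ h)
  -- total divergence vanishes
  have hdivsum : ∑ i, dvg w Y i = 0 := by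
    apply sum_antisym (fun i j => w i j * Y i j)
    intro i j
    rw [hw i j, hY i j]
    ring
  -- the right-hand side is orthogonal to the kernel
  set v : EuclideanSpace ℝ (Fin n) := (WithLp.equiv 2 (Fin n → ℝ)).symm (-(dvg w Y)) with hv
  have hvmem : v ∈ (LinearMap.ker T)ᗮ := by
    rw [Submodule.mem_orthogonal]
    intro u hu
    have hconst := hker u (LinearMap.mem_ker.mp hu)
    have hinner : ⟪u, v⟫ = ∑ i, u i * (-(dvg w Y i)) := by
      simp [hv, PiLp.inner_apply, WithLp.equiv_symm_apply, PiLp.toLp_apply, mul_comm]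
    rcases isEmpty_or_nonempty (Fin n) with he | hne
    · rw [hinner]; simp
    · obtain ⟨i0⟩ := hne
      rw [hinner]
      calc ∑ i, u i * (-(dvg w Y i)) = ∑ i, u i0 * (-(dvg w Y i)) := by
            refine Finset.sum_congr rfl fun i _ => ?_
            rw [hconst i i0]
        _ = u i0 * (-(∑ i, dvg w Y i)) := by rw [← Finset.mul_sum, ← Finset.sum_neg_distrib]
        _ = 0 := by rw [hdivsum]; ring
  obtain ⟨x, hx⟩ := h2 hvmem
  refine ⟨WithLp.equiv 2 (Fin n → ℝ) x, ?_⟩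
  have := congrArg (WithLp.equiv 2 (Fin n → ℝ)) hx
  simpa [hT, Matrix.toEuclideanLin_apply, hv] using this
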